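/- arXiv:1312.5518 — 5 statements merged into one kernel-verified Lean document; each statement's English description precedes it below -/
import Mathlib

section
/- If a semigroup S is a disjoint union of m copies of the free monogenic semigroup and also a disjoint union of n copies of the free monogenic semigroup, then m = n. -/
/-- `pw a n` is `a ^ n` for `n ≥ 1` (with junk value `a` at `n = 0`),
defined in any magma. -/
def pw {S : Type*} [Mul S] (a : S) : ℕ → S
  | 0 => a
  | 1 => a
  | n + 2 => pw a (n + 1) * a

/-- The monogenic subsemigroup `⟨a⟩ = {a^n : n ≥ 1}`. -/
def genSet {S : Type*} [Mul S] (a : S) : Set S := {x | ∃ n, 1 ≤ n ∧ pw a n = x}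

/-- `a` has infinite order: its positive powers are pairwise distinct,
i.e. `⟨a⟩` is free monogenic. -/
def InfOrder {S : Type*} [Mul S] (a : S) : Prop :=
  ∀ m n : ℕ, 1 ≤ m → 1 ≤ n → pw a m = pw a n → m = n

/-- `S` is a disjoint union of `k` copies of the free monogenic semigroup. -/
def IsDisjointUnionOfFreeMonogenic (S : Type*) [Semigroup S] (k : ℕ) : Prop :=
  ∃ a : Fin k → S,
    (∀ i, InfOrder (a i)) ∧
    (∀ i j, i ≠ j → genSet (a i) ∩ genSet (a j) = ∅) ∧
    (⋃ i, genSet (a i)) = Set.univ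

lemma pw_succ {S : Type*} [Mul S] (a : S) (n : ℕ) (h : 1 ≤ n) :
    pw a (n + 1) = pw a n * a := by
  rcases n with _ | k
  · omega
  · rfl

lemma pw_add {S : Type*} [Semigroup S] (a : S) (p q : ℕ) (hp : 1 ≤ p) (hq : 1 ≤ q) :
    pw a (p + q) = pw a p * pw a q := by
  induction q with
  | zero => omega
  | succ q ih =>
    rcases Nat.eq_or_lt_of_le hq with h | h
    · simp [← h, pw_succ a p hp, pw]
    · have hq1 : 1 ≤ q := by omega
      rw [← Nat.add_assoc, pw_succ a (p + q) (by omega), ih hq1,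
        pw_succ a q hq1, mul_assoc]

lemma pw_pw {S : Type*} [Semigroup S] (a : S) (p q : ℕ) (hp : 1 ≤ p) (hq : 1 ≤ q) :
    pw (pw a p) q = pw a (p * q) := by
  induction q with
  | zero => omega
  | succ q ih =>
    rcases Nat.eq_or_lt_of_le hq with h | h
    · simp [← h, pw]
    · have hq1 : 1 ≤ q := by omega
      rw [pw_succ _ q hq1, ih hq1, Nat.mul_succ, pw_add a (p*q) p (Nat.mul_pos hp hq1) hp]

lemma duf_le {S : Type*} [Semigroup S] {m n : ℕ}
    (hm : IsDisjointUnionOfFreeMonogenic S m)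
    (hn : IsDisjointUnionOfFreeMonogenic S n) :
    m ≤ n := by
  obtain ⟨a, _, had, _⟩ := hm
  obtain ⟨b, _, _, hbu⟩ := hn
  have key : ∀ i, ∃ j, ∃ p, 1 ≤ p ∧ pw (b j) p = a i := by
    intro i
    have : a i ∈ ⋃ j, genSet (b j) := hbu ▸ Set.mem_univ _
    obtain ⟨j, hj⟩ := Set.mem_iUnion.mp this
    obtain ⟨p, hp, hpe⟩ := hj
    exact ⟨j, p, hp, hpe⟩
  choose f p hp he using key
  have hinj : Function.Injective f := by
    intro i i' hff
    by_contra hne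
    have hdisj := had i i' hne
    have hx1 : pw (b (f i)) (p i * p i') ∈ genSet (a i) :=
      ⟨p i', hp i', by rw [← he i, pw_pw _ _ _ (hp i) (hp i')]⟩
    have hx2 : pw (b (f i)) (p i * p i') ∈ genSet (a i') :=
      ⟨p i, hp i, by rw [← he i', pw_pw _ _ _ (hp i') (hp i), hff, Nat.mul_comm]⟩
    have : pw (b (f i)) (p i * p i') ∈ genSet (a i) ∩ genSet (a i') := ⟨hx1, hx2⟩
    rw [hdisj] at this
    exact this
  calc m = Fintype.card (Fin m) := (Fintype.card_fin m).symm
    _ ≤ Fintype.card (Fin n) := Fintype.card_le_of_injective f hinj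
    _ = n := Fintype.card_fin n

/-- A semigroup cannot be a disjoint union of `m` and of `n` copies of
the free monogenic semigroup for `m ≠ n`. -/
theorem stmt_1 {S : Type*} [Semigroup S] {m n : ℕ}
    (hm : IsDisjointUnionOfFreeMonogenic S m)
    (hn : IsDisjointUnionOfFreeMonogenic S n) :
    m = n := by
  exact Nat.le_antisymm (duf_le hm hn) (duf_le hn hm)
end

section
/- Let S and T be semigroups each of which is a disjoint union of m copies of the free monogenic semigroup, with generators a₁,…,a_m of the copies in S and b₁,…,b_m of the copies in T. Then every surjective homomorphism φ : S → T with φ(aᵢ) = bᵢ for all i is an isomorphism. -/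

lemma pw_map {S T : Type*} [Mul S] [Mul T] (f : S →ₙ* T) (a : S) :
    ∀ n, f (pw a n) = pw (f a) n
  | 0 => rfl
  | 1 => rfl
  | n + 2 => by
    simp only [pw, map_mul, pw_map f a (n + 1)]

/-- If `S` and `T` are both disjoint unions of `m` copies of the free monogenic
semigroup, with copy generators `a i` and `b i` respectively, then every
surjective homomorphism `φ : S → T` with `φ (a i) = b i` is an isomorphism. -/
theorem stmt_3 {S T : Type*} [Semigroup S] [Semigroup T] {m : ℕ}
    (a : Fin m → S) (b : Fin m → T)
    (haFree : ∀ i, InfOrder (a i))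
    (haDisj : ∀ i j, i ≠ j → genSet (a i) ∩ genSet (a j) = ∅)
    (haCover : (⋃ i, genSet (a i)) = Set.univ)
    (hbFree : ∀ i, InfOrder (b i))
    (hbDisj : ∀ i j, i ≠ j → genSet (b i) ∩ genSet (b j) = ∅)
    (hbCover : (⋃ i, genSet (b i)) = Set.univ)
    (φ : S →ₙ* T) (hsurj : Function.Surjective φ) (hφ : ∀ i, φ (a i) = b i) :
    Function.Bijective φ := by
  refine ⟨?_, hsurj⟩
  intro x y hxy
  have hx : x ∈ ⋃ i, genSet (a i) := haCover ▸ Set.mem_univ x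
  have hy : y ∈ ⋃ i, genSet (a i) := haCover ▸ Set.mem_univ y
  obtain ⟨_, ⟨i, rfl⟩, n, hn, rfl⟩ := hx
  obtain ⟨_, ⟨j, rfl⟩, k, hk, rfl⟩ := hy
  rw [pw_map, pw_map, hφ, hφ] at hxy
  have hij : i = j := by
    by_contra hne
    have : pw (b i) n ∈ genSet (b i) ∩ genSet (b j) :=
      ⟨⟨n, hn, rfl⟩, ⟨k, hk, hxy.symm⟩⟩
    simpa [hbDisj i j hne] using this
  subst hij
  rw [hbFree i n k hn hk hxy]
end

section
/- Let S be a semigroup that is the disjoint union of free monogenic subsemigroups ⟨a⟩, ⟨b⟩, ⟨c⟩, with ab = ba = a^i for some i ≥ 1. Then neither ac nor ca lies in ⟨b⟩. -/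
namespace Stmt9

variable {S : Type*} [Semigroup S]

lemma pw_one (a : S) : pw a 1 = a := rfl

lemma pw_succ (a : S) {n : ℕ} (hn : 1 ≤ n) : pw a (n + 1) = pw a n * a := by
  match n, hn with
  | n + 1, _ => rfl

lemma pw_add (a : S) {m n : ℕ} (hm : 1 ≤ m) (hn : 1 ≤ n) :
    pw a (m + n) = pw a m * pw a n := by
  induction n with
  | zero => omega
  | succ k ih =>
    rcases Nat.lt_or_ge k 1 with h | hk
    · have : k = 0 := by omega
      subst this
      simpa [pw_one] using pw_succ a hm
    · have h : m + (k + 1) = (m + k) + 1 := by ring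
      rw [h, pw_succ a (by omega), ih hk, pw_succ a hk, mul_assoc]

lemma pw_succ' (a : S) {n : ℕ} (hn : 1 ≤ n) : pw a (n + 1) = a * pw a n := by
  have h := pw_add a (le_refl 1) hn
  rw [Nat.one_add] at h
  simpa [pw_one] using h

lemma key (a b c : S)
    (hb : InfOrder b)
    (hab : genSet a ∩ genSet b = ∅) (hac : genSet a ∩ genSet c = ∅)
    (hcover : genSet a ∪ genSet b ∪ genSet c = Set.univ)
    (i : ℕ) (hi : 1 ≤ i) (h1 : a * b = pw a i) (h2 : b * a = pw a i) :
    a * c ∉ genSet b := by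
  -- helper: no element is in both ⟨a⟩ and ⟨b⟩
  have hAB : ∀ m k : ℕ, 1 ≤ m → 1 ≤ k → pw a m ≠ pw b k := by
    intro m k hm hk h
    exact Set.eq_empty_iff_forall_notMem.mp hab (pw a m) ⟨⟨m, hm, rfl⟩, ⟨k, hk, h.symm⟩⟩
  -- pw a q * b = pw a (q + (i-1))
  have hqb : ∀ q : ℕ, 1 ≤ q → pw a q * b = pw a (q + (i - 1)) := by
    intro q hq
    induction q with
    | zero => omega
    | succ k ih =>
      rcases Nat.lt_or_ge k 1 with h | hk
      · have : k = 0 := by omega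
        subst this
        have : 1 + (i - 1) = i := by omega
        rw [this, pw_one]; exact h1
      · rw [pw_succ' a hk, mul_assoc, ih hk, ← pw_succ' a (by omega)]
        exact congrArg (pw a) (by omega)
  -- b * pw a q = pw a ((i-1) + q)
  have hbq : ∀ q : ℕ, 1 ≤ q → b * pw a q = pw a ((i - 1) + q) := by
    intro q hq
    induction q with
    | zero => omega
    | succ k ih =>
      rcases Nat.lt_or_ge k 1 with h | hk
      · have : k = 0 := by omega
        subst this
        have : (i - 1) + 1 = i := by omega
        rw [this, pw_one]; exact h2
      · rw [pw_succ a hk, ← mul_assoc, ih hk, ← pw_succ a (by omega)]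
        exact congrArg (pw a) (by omega)
  -- a * pw b m = pw a (1 + m * (i-1))
  have habm : ∀ m : ℕ, 1 ≤ m → a * pw b m = pw a (1 + m * (i - 1)) := by
    intro m hm
    induction m with
    | zero => omega
    | succ k ih =>
      rcases Nat.lt_or_ge k 1 with h | hk
      · have : k = 0 := by omega
        subst this
        have : 1 + 1 * (i - 1) = i := by omega
        rw [this, pw_one]; exact h1
      · rw [pw_succ b hk, ← mul_assoc, ih hk, hqb _ (by omega)]
        exact congrArg (pw a) (by ring)
  -- pw b m * a = pw a (1 + m * (i-1))
  have hbma : ∀ m : ℕ, 1 ≤ m → pw b m * a = pw a (1 + m * (i - 1)) := by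
    intro m hm
    induction m with
    | zero => omega
    | succ k ih =>
      rcases Nat.lt_or_ge k 1 with h | hk
      · have : k = 0 := by omega
        subst this
        have : 1 + 1 * (i - 1) = i := by omega
        rw [this, pw_one]; exact h2
      · rw [pw_succ' b hk, mul_assoc, ih hk, hbq _ (by omega)]
        exact congrArg (pw a) (by ring)
  -- main argument
  rintro ⟨m, hm, hmain⟩
  -- hmain : pw b m = a * c
  set p : ℕ := 1 + m * (i - 1) with hp_def
  have hp : 1 ≤ p := by omega
  have ha2c : a * (a * c) = pw a p := by rw [← hmain]; exact habm m hm
  -- pw a (n+2) * c = pw a (n + p)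
  have hpac : ∀ n : ℕ, pw a (n + 2) * c = pw a (n + p) := by
    intro n
    induction n with
    | zero =>
      have : pw a 2 = a * a := by rw [pw_succ a le_rfl, pw_one]
      rw [Nat.zero_add, this, mul_assoc, ha2c, Nat.zero_add]
    | succ k ih =>
      have h3 : pw a (k + 3) = a * pw a (k + 2) := pw_succ' a (by omega)
      rw [show k + 1 + 2 = k + 3 from rfl, h3, mul_assoc, ih,
        ← pw_succ' a (by omega)]
      congr 1; omega
  rcases Nat.lt_or_ge i 2 with hilt | hige
  · -- case i = 1
    have hi1 : i = 1 := by omega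
    have hp1 : p = 1 := by rw [hp_def, hi1]; ring
    have ha2c' : a * (a * c) = a := by rw [ha2c, hp1, pw_one]
    -- where is c * a ?
    have hca : c * a ∈ genSet a ∪ genSet b ∪ genSet c := by
      rw [hcover]; trivial
    rcases hca with (⟨q, hq, hcaq⟩ | ⟨r, hr, hcar⟩) | ⟨s, hs, hcas⟩
    · -- c * a = pw a q : then (ac)(ac) = pw a q  but also pw b (m+m)
      have e1 : (a * c) * (a * c) = pw b (m + m) := by
        rw [← hmain, ← pw_add b hm hm]
      have e2 : (a * c) * (a * c) = pw a q := by
        calc (a * c) * (a * c) = (a * (c * a)) * c := by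
              rw [mul_assoc, mul_assoc, mul_assoc]
          _ = pw a (q + 1) * c := by rw [← hcaq, ← pw_succ' a hq]
          _ = pw a (q - 1 + 2) * c := by congr 2; omega
          _ = pw a (q - 1 + p) := hpac _
          _ = pw a q := by congr 1; omega
      exact hAB q (m + m) hq (by omega) (e2.symm.trans e1)
    · -- c * a = pw b r
      have e1 : (a * c) * (a * c) = pw b (m + m) := by
        rw [← hmain, ← pw_add b hm hm]
      have e2 : (a * c) * (a * c) = pw b m := by
        calc (a * c) * (a * c) = (a * (c * a)) * c := by
              rw [mul_assoc, mul_assoc, mul_assoc]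
          _ = pw a (1 + r * (i - 1)) * c := by rw [← hcar, habm r hr]
          _ = pw a 1 * c := by rw [hi1]; simp
          _ = a * c := by rw [pw_one]
          _ = pw b m := hmain.symm
      have := hb (m + m) m (by omega) hm (e1.symm.trans e2)
      omega
    · -- c * a = pw c s
      have e1 : a * pw c s = a := by
        calc a * pw c s = a * (c * a) := by rw [← hcas]
          _ = (a * c) * a := by rw [mul_assoc]
          _ = pw b m * a := by rw [hmain]
          _ = pw a (1 + m * (i - 1)) := hbma m hm
          _ = a := by rw [hi1]; simpa using pw_one a
      -- now induct downwards: a * pw c s = pw a t is impossible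
      have down : ∀ s : ℕ, 1 ≤ s → ∀ t : ℕ, 1 ≤ t → a * pw c s = pw a t → False := by
        intro s
        induction s with
        | zero => omega
        | succ k ih =>
          intro _ t ht hst
          rcases Nat.lt_or_ge k 1 with h | hk
          · have : k = 0 := by omega
            subst this
            rw [pw_one] at hst
            exact hAB t m ht hm (hst.symm.trans hmain.symm)
          · apply ih hk (t + 1) (by omega)
            calc a * pw c k = (a * (a * c)) * pw c k := by rw [ha2c']
              _ = a * (a * (c * pw c k)) := by rw [mul_assoc, mul_assoc]
              _ = a * (a * pw c (k + 1)) := by rw [← pw_succ' c hk]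
              _ = a * pw a t := by rw [hst]
              _ = pw a (t + 1) := (pw_succ' a ht).symm
      exact down s hs 1 le_rfl (by rw [e1, pw_one])
  · -- case i ≥ 2
    have e1 : b * (a * c) = pw b (m + 1) := by
      rw [← hmain, pw_succ b hm, ← pw_succ' b hm, pw_succ b hm]
    have e2 : b * (a * c) = pw a (i - 2 + p) := by
      calc b * (a * c) = (b * a) * c := by rw [mul_assoc]
        _ = pw a i * c := by rw [h2]
        _ = pw a (i - 2 + 2) * c := by congr 2; omega
        _ = pw a (i - 2 + p) := hpac _
    exact hAB (i - 2 + p) (m + 1) (by omega) (by omega) (e2.symm.trans e1)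

open MulOpposite

lemma pw_op (a : S) : ∀ n : ℕ, 1 ≤ n → pw (op a) n = op (pw a n) := by
  intro n hn
  induction n with
  | zero => omega
  | succ k ih =>
    rcases Nat.lt_or_ge k 1 with h | hk
    · have : k = 0 := by omega
      subst this; rfl
    · rw [pw_succ (op a) hk, ih hk, pw_succ' a hk, ← op_mul]

lemma genSet_op (a : S) (x : S) : op x ∈ genSet (op a) ↔ x ∈ genSet a := by
  constructor
  · rintro ⟨n, hn, h⟩
    rw [pw_op a n hn] at h
    exact ⟨n, hn, op_injective h⟩
  · rintro ⟨n, hn, h⟩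
    exact ⟨n, hn, by rw [pw_op a n hn, h]⟩

lemma infOrder_op (a : S) (ha : InfOrder a) : InfOrder (op a) := by
  intro m n hm hn h
  rw [pw_op a m hm, pw_op a n hn] at h
  exact ha m n hm hn (op_injective h)

lemma disj_op (a b : S) (h : genSet a ∩ genSet b = ∅) :
    genSet (op a) ∩ genSet (op b) = ∅ := by
  rw [Set.eq_empty_iff_forall_notMem]
  rintro y ⟨hy1, hy2⟩
  rw [show y = op (unop y) from rfl, genSet_op] at hy1 hy2
  exact Set.eq_empty_iff_forall_notMem.mp h (unop y) ⟨hy1, hy2⟩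

lemma cover_op (a b c : S) (h : genSet a ∪ genSet b ∪ genSet c = Set.univ) :
    genSet (op a) ∪ genSet (op b) ∪ genSet (op c) = Set.univ := by
  rw [Set.eq_univ_iff_forall]
  intro y
  have : unop y ∈ genSet a ∪ genSet b ∪ genSet c := by rw [h]; trivial
  rcases this with (h' | h') | h'
  · exact Or.inl (Or.inl (by rw [show y = op (unop y) from rfl, genSet_op]; exact h'))
  · exact Or.inl (Or.inr (by rw [show y = op (unop y) from rfl, genSet_op]; exact h'))
  · exact Or.inr (by rw [show y = op (unop y) from rfl, genSet_op]; exact h')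

end Stmt9

theorem stmt_9 {S : Type*} [Semigroup S] (a b c : S)
    (ha : InfOrder a) (hb : InfOrder b) (hc : InfOrder c)
    (hab : genSet a ∩ genSet b = ∅) (hac : genSet a ∩ genSet c = ∅)
    (hbc : genSet b ∩ genSet c = ∅)
    (hcover : genSet a ∪ genSet b ∪ genSet c = Set.univ)
    (i : ℕ) (hi : 1 ≤ i) (h1 : a * b = pw a i) (h2 : b * a = pw a i) :
    a * c ∉ genSet b ∧ c * a ∉ genSet b := by
  open MulOpposite in
  refine ⟨Stmt9.key a b c hb hab hac hcover i hi h1 h2, ?_⟩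
  intro hmem
  have h1' : op a * op b = pw (op a) i := by
    rw [Stmt9.pw_op a i hi, ← h2, ← op_mul]
  have h2' : op b * op a = pw (op a) i := by
    rw [Stmt9.pw_op a i hi, ← h1, ← op_mul]
  have hkey := Stmt9.key (op a) (op b) (op c) (Stmt9.infOrder_op b hb)
    (Stmt9.disj_op a b hab) (Stmt9.disj_op a c hac)
    (Stmt9.cover_op a b c hcover) i hi h1' h2'
  apply hkey
  obtain ⟨m, hm, hmm⟩ := hmem
  exact ⟨m, hm, by rw [Stmt9.pw_op b m hm, hmm, op_mul]⟩
end

section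
/- Let S be a semigroup that is the disjoint union of free monogenic subsemigroups ⟨a⟩, ⟨b⟩, ⟨c⟩, and suppose ab = b², ba = a², ac = b^i, ca = a^j, bc = a^k, cb = b^l for positive integers i, j, k, l. Then i = j = k = l. -/
lemma pw_cross {S : Type*} [Semigroup S] {x a : S} (h : x * a = pw a 2) :
    ∀ n, 1 ≤ n → x * pw a n = pw a (n + 1) := by
  intro n hn
  induction n with
  | zero => omega
  | succ m ih =>
    match m, ih with
    | 0, _ => exact h
    | m + 1, ih =>
      show x * (pw a (m + 1) * a) = pw a (m + 2) * a
      rw [← mul_assoc, ih (by omega)]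

lemma pw_powmul {S : Type*} [Semigroup S] {x a : S} (h : x * a = pw a 2) :
    ∀ m n, 1 ≤ m → 1 ≤ n → pw x m * pw a n = pw a (m + n) := by
  intro m
  induction m with
  | zero => omega
  | succ m ih =>
    intro n hm hn
    match m, ih with
    | 0, _ =>
      simpa [Nat.add_comm, show pw x 1 = x from rfl] using pw_cross h n hn
    | m + 1, ih =>
      show pw x (m + 1) * x * pw a n = _
      rw [mul_assoc, pw_cross h n hn, ih (n + 1) (by omega) (by omega)]
      congr 1
      omega

theorem stmt_18 {S : Type*} [Semigroup S] (a b c : S)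
    (ha : InfOrder a) (hb : InfOrder b) (hc : InfOrder c)
    (hab : genSet a ∩ genSet b = ∅) (hac : genSet a ∩ genSet c = ∅)
    (hbc : genSet b ∩ genSet c = ∅)
    (hcover : genSet a ∪ genSet b ∪ genSet c = Set.univ)
    (i j k l : ℕ) (hi : 1 ≤ i) (hj : 1 ≤ j) (hk : 1 ≤ k) (hl : 1 ≤ l)
    (h1 : a * b = pw b 2) (h2 : b * a = pw a 2)
    (h3 : a * c = pw b i) (h4 : c * a = pw a j)
    (h5 : b * c = pw a k) (h6 : c * b = pw b l) :
    i = j ∧ j = k ∧ k = l := by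
  have haa : a * a = pw a 2 := rfl
  have hbb : b * b = pw b 2 := rfl
  -- i = j : (b*a)*(c*a) = a^{2+j}, (b*(a*c))*a = b^{i+1}*a = a^{i+2}
  have e1 : pw a (2 + j) = pw a (i + 1 + 1) := by
    calc pw a (2 + j) = pw a 2 * pw a j := (pw_powmul haa 2 j (by omega) hj).symm
    _ = (b * a) * (c * a) := by rw [h2, h4]
    _ = (b * (a * c)) * a := by simp only [mul_assoc]
    _ = (b * pw b i) * a := by rw [h3]
    _ = pw b (i + 1) * pw a 1 := by rw [pw_cross hbb i hi]; rfl
    _ = pw a (i + 1 + 1) := pw_powmul h2 (i + 1) 1 (by omega) le_rfl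
  have hij : i = j := by
    have := ha _ _ (by omega) (by omega) e1
    omega
  -- k = l : (a*b)*(c*b) = b^{2+l}, (a*(b*c))*b = a^{k+1}*b = b^{k+2}
  have e2 : pw b (2 + l) = pw b (k + 1 + 1) := by
    calc pw b (2 + l) = pw b 2 * pw b l := (pw_powmul hbb 2 l (by omega) hl).symm
    _ = (a * b) * (c * b) := by rw [h1, h6]
    _ = (a * (b * c)) * b := by simp only [mul_assoc]
    _ = (a * pw a k) * b := by rw [h5]
    _ = pw a (k + 1) * pw b 1 := by rw [pw_cross haa k hk]; rfl
    _ = pw b (k + 1 + 1) := pw_powmul h1 (k + 1) 1 (by omega) le_rfl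
  have hkl : k = l := by
    have := hb _ _ (by omega) (by omega) e2
    omega
  -- j = k : (b*c)*(a*b) = a^k*b^2 = b^{k+2}, b*((c*a)*b) = b*(a^j*b) = b^{j+2}
  have e3 : pw b (k + 2) = pw b (j + 1 + 1) := by
    calc pw b (k + 2) = pw a k * pw b 2 := (pw_powmul h1 k 2 hk (by omega)).symm
    _ = (b * c) * (a * b) := by rw [h5, h1]
    _ = b * ((c * a) * b) := by simp only [mul_assoc]
    _ = b * (pw a j * pw b 1) := by rw [h4]; rfl
    _ = b * pw b (j + 1) := by rw [pw_powmul h1 j 1 hj le_rfl]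
    _ = pw b (j + 1 + 1) := pw_cross hbb (j + 1) (by omega)
  have hjk : j = k := by
    have := hb _ _ (by omega) (by omega) e3
    omega
  exact ⟨hij, hjk, hkl⟩
end

section
/- The semigroup defined by the presentation ⟨a, b, c | ab = b², ba = a², ac = c², ca = a², bc = c², cb = b²⟩ is the disjoint union of the free monogenic subsemigroups ⟨a⟩, ⟨b⟩, ⟨c⟩ (pairwise disjoint and each infinite, with union the whole semigroup). -/
namespace Stmt19

def A : FreeSemigroup (Fin 3) := FreeSemigroup.of 0
def B : FreeSemigroup (Fin 3) := FreeSemigroup.of 1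
def C : FreeSemigroup (Fin 3) := FreeSemigroup.of 2

/-- The relations `ab = b²`, `ba = a²`, `ac = c²`, `ca = a²`, `bc = c²`, `cb = b²`. -/
def rel : FreeSemigroup (Fin 3) → FreeSemigroup (Fin 3) → Prop := fun u v =>
  (u = A * B ∧ v = pw B 2) ∨ (u = B * A ∧ v = pw A 2) ∨
  (u = A * C ∧ v = pw C 2) ∨ (u = C * A ∧ v = pw A 2) ∨
  (u = B * C ∧ v = pw C 2) ∨ (u = C * B ∧ v = pw B 2)

/-- The semigroup defined by the presentation
`⟨a, b, c | ab = b², ba = a², ac = c², ca = a², bc = c², cb = b²⟩`. -/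
def Sem := (conGen rel).Quotient

instance : Semigroup Sem := inferInstanceAs (Semigroup (conGen rel).Quotient)

def a' : Sem := (A : (conGen rel).Quotient)
def b' : Sem := (B : (conGen rel).Quotient)
def c' : Sem := (C : (conGen rel).Quotient)

/- auxiliary -/

lemma pw_map {S T : Type*} [Mul S] [Mul T] (f : S → T)
    (hf : ∀ x y, f (x * y) = f x * f y) (s : S) : ∀ n, f (pw s n) = pw (f s) n
  | 0 => rfl
  | 1 => rfl
  | n + 2 => by
    show f (pw s (n + 1) * s) = pw (f s) (n + 1) * f s
    rw [hf, pw_map f hf s (n + 1)]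

def RZ := Fin 3

instance : Semigroup RZ := { mul := fun _ y => y, mul_assoc := fun _ _ _ => rfl }

def frz : FreeSemigroup (Fin 3) →ₙ* RZ := FreeSemigroup.lift (fun i => (i : RZ))

def flen : FreeSemigroup (Fin 3) →ₙ* Multiplicative ℕ :=
  FreeSemigroup.lift (fun _ => Multiplicative.ofAdd 1)

lemma pw_rz (x : RZ) : ∀ n, pw x n = x
  | 0 => rfl
  | 1 => rfl
  | n + 2 => show pw x (n+1) * x = x from rfl

lemma pw_len : ∀ n, pw (Multiplicative.ofAdd 1 : Multiplicative ℕ) (n + 1) = Multiplicative.ofAdd (n + 1)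
  | 0 => rfl
  | n + 1 => by
    show pw (Multiplicative.ofAdd 1 : Multiplicative ℕ) (n + 1) * Multiplicative.ofAdd 1 = _
    rw [pw_len n]
    rfl

lemma frz_inv {u v} (h : conGen rel u v) : frz u = frz v := by
  refine Con.le_def.1 ((Con.conGen_le (c := Con.ker frz)).2 ?_) h
  rintro x y (⟨hx, hy⟩|⟨hx, hy⟩|⟨hx, hy⟩|⟨hx, hy⟩|⟨hx, hy⟩|⟨hx, hy⟩) <;> subst hx <;> subst hy <;>
    show frz _ = frz _ <;>
    simp only [A, B, C, pw, map_mul, frz, FreeSemigroup.lift_of] <;> rfl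

lemma flen_inv {u v} (h : conGen rel u v) : flen u = flen v := by
  refine Con.le_def.1 ((Con.conGen_le (c := Con.ker flen)).2 ?_) h
  rintro x y (⟨hx, hy⟩|⟨hx, hy⟩|⟨hx, hy⟩|⟨hx, hy⟩|⟨hx, hy⟩|⟨hx, hy⟩) <;> subst hx <;> subst hy <;>
    show flen _ = flen _ <;>
    simp only [A, B, C, pw, map_mul, flen, FreeSemigroup.lift_of]

def gen (i : Fin 3) : Sem := (FreeSemigroup.of i : (conGen rel).Quotient)

def mk (w : FreeSemigroup (Fin 3)) : Sem := (w : (conGen rel).Quotient)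

lemma mk_mul (u v : FreeSemigroup (Fin 3)) : mk (u * v) = mk u * mk v := rfl

lemma pw_mk (u : FreeSemigroup (Fin 3)) (n : ℕ) : mk (pw u n) = pw (mk u) n :=
  pw_map mk (fun _ _ => rfl) u n

lemma gen_mul (i j : Fin 3) : gen i * gen j = gen j * gen j := by
  fin_cases i <;> fin_cases j <;> first
    | rfl
    | (exact (Con.eq (conGen rel)).2 (ConGen.Rel.of _ _ (by unfold rel A B C; tauto)))


lemma pw_succ {S : Type*} [Mul S] (s : S) : ∀ m, 1 ≤ m → pw s (m + 1) = pw s m * s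
  | _ + 1, _ => rfl

lemma step (i j : Fin 3) : ∀ m, 1 ≤ m → pw (gen i) m * gen j = pw (gen j) (m + 1)
  | 1, _ => gen_mul i j
  | m + 2, _ => by
    have ih := step i j (m + 1) (by omega)
    calc pw (gen i) (m + 2) * gen j = pw (gen i) (m + 1) * gen i * gen j := rfl
      _ = pw (gen i) (m + 1) * (gen i * gen j) := mul_assoc _ _ _
      _ = pw (gen i) (m + 1) * (gen j * gen j) := by rw [gen_mul]
      _ = (pw (gen i) (m + 1) * gen j) * gen j := (mul_assoc _ _ _).symm
      _ = pw (gen j) (m + 2) * gen j := by rw [ih]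
      _ = pw (gen j) (m + 3) := rfl

lemma mix (i j : Fin 3) (m : ℕ) (hm : 1 ≤ m) :
    ∀ n, 1 ≤ n → pw (gen i) m * pw (gen j) n = pw (gen j) (m + n)
  | 1, _ => step i j m hm
  | n + 2, _ => by
    calc pw (gen i) m * pw (gen j) (n + 2)
        = pw (gen i) m * (pw (gen j) (n + 1) * gen j) := rfl
      _ = (pw (gen i) m * pw (gen j) (n + 1)) * gen j := (mul_assoc _ _ _).symm
      _ = pw (gen j) (m + (n + 1)) * gen j := by rw [mix i j m hm (n + 1) (by omega)]
      _ = pw (gen j) (m + (n + 1) + 1) := (pw_succ (gen j) (m + (n + 1)) (by omega)).symm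
      _ = pw (gen j) (m + (n + 2)) := rfl

lemma surj (x : Sem) : ∃ i m, 1 ≤ m ∧ x = pw (gen i) m := by
  induction x using Con.induction_on with
  | H w =>
    induction w using FreeSemigroup.recOnMul with
    | ih1 i => exact ⟨i, 1, le_refl 1, rfl⟩
    | ih2 u v hu hv =>
      obtain ⟨i, m, hm, hu⟩ := hu
      obtain ⟨j, n, hn, hv⟩ := hv
      refine ⟨j, m + n, by omega, ?_⟩
      show mk (FreeSemigroup.of u) * mk v = _
      rw [show mk (FreeSemigroup.of u) = pw (gen i) m from hu, show mk v = pw (gen j) n from hv,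
        mix i j m hm n hn]

lemma flen_pw (u : FreeSemigroup (Fin 3)) (hu : flen u = Multiplicative.ofAdd 1) :
    ∀ m, 1 ≤ m → flen (pw u m) = Multiplicative.ofAdd m
  | k + 1, _ => by rw [pw_map flen (map_mul flen), hu, pw_len]

lemma frz_pw (u : FreeSemigroup (Fin 3)) (m : ℕ) : frz (pw u m) = frz u := by
  rw [pw_map frz (map_mul frz), pw_rz]

lemma inf (u : FreeSemigroup (Fin 3)) (hu : flen u = Multiplicative.ofAdd 1) :
    InfOrder (mk u) := by
  intro m n hm hn h
  have h1 : mk (pw u m) = mk (pw u n) := by rw [pw_mk, pw_mk]; exact h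
  have h2 := flen_inv ((Con.eq (conGen rel)).1 h1)
  rw [flen_pw u hu m hm, flen_pw u hu n hn] at h2
  exact Multiplicative.ofAdd.injective h2

lemma disj (u v : FreeSemigroup (Fin 3)) (huv : frz u ≠ frz v) :
    genSet (mk u) ∩ genSet (mk v) = ∅ := by
  ext x
  simp only [Set.mem_inter_iff, Set.mem_empty_iff_false, iff_false, not_and]
  rintro ⟨m, hm, hx⟩ ⟨n, hn, hy⟩
  have h1 : mk (pw u m) = mk (pw v n) := by rw [pw_mk, pw_mk, hx, hy]
  have h2 := frz_inv ((Con.eq (conGen rel)).1 h1)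
  rw [frz_pw, frz_pw] at h2
  exact huv h2


/-- The presented semigroup is the disjoint union of the free monogenic
subsemigroups `⟨a⟩`, `⟨b⟩`, `⟨c⟩`: each is infinite (the generators have
infinite order), they are pairwise disjoint, and their union is everything. -/
theorem stmt_19 :
    InfOrder a' ∧ InfOrder b' ∧ InfOrder c' ∧
      genSet a' ∩ genSet b' = ∅ ∧ genSet a' ∩ genSet c' = ∅ ∧
      genSet b' ∩ genSet c' = ∅ ∧
      genSet a' ∪ genSet b' ∪ genSet c' = Set.univ := by
  refine ⟨inf A rfl, inf B rfl, inf C rfl, disj A B ?_, disj A C ?_, disj B C ?_, ?_⟩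
  · exact fun h => absurd (show (0 : Fin 3) = 1 from h) (by decide)
  · exact fun h => absurd (show (0 : Fin 3) = 2 from h) (by decide)
  · exact fun h => absurd (show (1 : Fin 3) = 2 from h) (by decide)
  · refine Set.eq_univ_of_forall fun x => ?_
    obtain ⟨i, m, hm, rfl⟩ := surj x
    fin_cases i
    · exact Or.inl (Or.inl ⟨m, hm, rfl⟩)
    · exact Or.inl (Or.inr ⟨m, hm, rfl⟩)
    · exact Or.inr ⟨m, hm, rfl⟩

end Stmt19
end
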